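/- Let φ₁, φ₂, ε₁, ε₂ be real numbers with 0 < φ₁ < 1, 0 < ε₁ < φ₁, and 0 < ε₂ < φ₂ < 1, and set β = 1/(ε₂·φ₁) and γ = (ε₂ + φ₂)/(ε₂·φ₁). Assume 1/ε₁ > γ + √(β·γ), and set k₁ = 1/ε₁ and k₂ = β·k₁/(k₁ − γ). Then k₁ + k₂ < 1/ε₁ + 1/(ε₁·√(ε₂ + φ₂)). (This is the space bound of CSSCHH in the case 1/ε₁ > γ + √(βγ), establishing the space complexity O(1/(ε₁·√ε₂)).) -/

import Mathlib

theorem cs_space_bound_case2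
    (φ₁ φ₂ ε₁ ε₂ : ℝ)
    (hφ₁ : 0 < φ₁) (hφ₁' : φ₁ < 1)
    (hε₁ : 0 < ε₁) (hε₁φ₁ : ε₁ < φ₁)
    (hε₂ : 0 < ε₂) (hε₂φ₂ : ε₂ < φ₂) (hφ₂' : φ₂ < 1) :
    let β := 1 / (ε₂ * φ₁)
    let γ := (ε₂ + φ₂) / (ε₂ * φ₁)
    1 / ε₁ > γ + Real.sqrt (β * γ) →
    (let k₁ := 1 / ε₁
     let k₂ := β * k₁ / (k₁ - γ)
     k₁ + k₂ < 1 / ε₁ + 1 / (ε₁ * Real.sqrt (ε₂ + φ₂))) := by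
  intro β γ h k₁ k₂
  have hp : 0 < ε₂ * φ₁ := mul_pos hε₂ hφ₁
  have hsumpos : (0:ℝ) < ε₂ + φ₂ := by linarith
  set s := Real.sqrt (ε₂ + φ₂) with hs_def
  have hs : 0 < s := Real.sqrt_pos.2 hsumpos
  have hs2 : s ^ 2 = ε₂ + φ₂ := Real.sq_sqrt hsumpos.le
  have hsqrt : Real.sqrt (β * γ) = s / (ε₂ * φ₁) := by
    have : β * γ = (s / (ε₂ * φ₁)) ^ 2 := by
      rw [div_pow, hs2]
      show 1 / (ε₂ * φ₁) * ((ε₂ + φ₂) / (ε₂ * φ₁)) = _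
      field_simp
    rw [this, Real.sqrt_sq (by positivity)]
  have hk₁ : 0 < k₁ := by
    show (0:ℝ) < 1 / ε₁
    positivity
  have hβ : 0 < β := by
    show (0:ℝ) < 1 / (ε₂ * φ₁)
    positivity
  have hgap : s / (ε₂ * φ₁) < k₁ - γ := by
    have := h
    rw [hsqrt] at this
    show s / (ε₂ * φ₁) < 1 / ε₁ - γ
    linarith [this]
  have hspos : 0 < s / (ε₂ * φ₁) := by positivity
  have hk₂ : k₂ < k₁ / s := by
    show β * k₁ / (k₁ - γ) < k₁ / s
    have h1 : β * k₁ / (k₁ - γ) < β * k₁ / (s / (ε₂ * φ₁)) :=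
      div_lt_div_of_pos_left (by positivity) hspos hgap
    have h2 : β * k₁ / (s / (ε₂ * φ₁)) = k₁ / s := by
      show 1 / (ε₂ * φ₁) * k₁ / (s / (ε₂ * φ₁)) = k₁ / s
      field_simp
    linarith [h1, h2.le, h2.ge]
  have : k₁ / s = 1 / (ε₁ * s) := by
    show (1 / ε₁) / s = 1 / (ε₁ * s)
    field_simp
  calc k₁ + k₂ < k₁ + k₁ / s := by linarith
    _ = 1 / ε₁ + 1 / (ε₁ * s) := by rw [this]
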